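/- Let x > 1 be irrational with OCF digits (aₙ(x), eₙ(x)) and OCF convergent numerators pₙ. Define F₁ = ∪_{k≥0} (2k+g, 2k+1), F₂ = ∪_{k≥1} [2k−1, 2k), and F₃ = ∪_{k≥1} [2k, 2k+g). Then for every n ≥ 1: if pₙ/pₙ₋₁ ∈ F₁ then aₙ = ⌊pₙ/pₙ₋₁⌋ + 1 and eₙ₋₁ = −1; if pₙ/pₙ₋₁ ∈ F₂ then aₙ = ⌊pₙ/pₙ₋₁⌋ and eₙ₋₁ = +1; and if pₙ/pₙ₋₁ ∈ F₃ then aₙ = ⌊pₙ/pₙ₋₁⌋ − 1 and eₙ₋₁ = +1. -/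

import Mathlib

noncomputable section

/-- The golden ratio `G = (1+√5)/2`. -/
def Gphi : ℝ := (1 + Real.sqrt 5) / 2

/-- `g = (√5−1)/2`. -/
def gphi : ℝ := (Real.sqrt 5 - 1) / 2

/-- The first OCF digit `a₁(x)`: the unique odd integer `a` with `x ∈ [a−1, a+1)`. -/
def ocfA (x : ℝ) : ℤ := 2 * ⌊x / 2⌋ + 1

/-- The first OCF sign `e₁(x)`. -/
def ocfE (x : ℝ) : ℤ := if (ocfA x : ℝ) ≤ x then 1 else -1

/-- The Odd Gauss map `T_o`. -/
def To (x : ℝ) : ℝ := (ocfE x : ℝ) / (x - (ocfA x : ℝ))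

/-- `p`-convergents of the OCF expansion of `x`. -/
def ocfP (x : ℝ) : ℕ → ℤ
  | 0 => 1
  | 1 => ocfA x
  | (n+2) => ocfA (To^[n+1] x) * ocfP x (n+1) + ocfE (To^[n] x) * ocfP x n

lemma gphi_pos : 0 < gphi := by
  unfold gphi
  nlinarith [Real.sq_sqrt (show (0:ℝ) ≤ 5 by norm_num), Real.sqrt_nonneg 5]

lemma gphi_lt_one : gphi < 1 := by
  unfold gphi
  nlinarith [Real.sq_sqrt (show (0:ℝ) ≤ 5 by norm_num), Real.sqrt_nonneg 5]

lemma gphi_sq : gphi ^ 2 = 1 - gphi := by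
  unfold gphi
  nlinarith [Real.sq_sqrt (show (0:ℝ) ≤ 5 by norm_num)]

lemma ocfA_le (y : ℝ) : (ocfA y : ℝ) - 1 ≤ y := by
  have := Int.floor_le (y/2); unfold ocfA; push_cast; linarith

lemma lt_ocfA (y : ℝ) : y < (ocfA y : ℝ) + 1 := by
  have := Int.lt_floor_add_one (y/2); unfold ocfA; push_cast; linarith

lemma ocfA_one_le {y : ℝ} (hy : 1 < y) : 1 ≤ ocfA y := by
  have : 0 ≤ ⌊y/2⌋ := Int.floor_nonneg.2 (by linarith)
  unfold ocfA; omega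

lemma ocfE_eq (y : ℝ) : ocfE y = 1 ∨ ocfE y = -1 := by
  unfold ocfE; split <;> simp

lemma ocfE_neg_a {y : ℝ} (hy : 1 < y) (h : ocfE y = -1) : 3 ≤ ocfA y := by
  unfold ocfE at h
  split_ifs at h with hle
  push_neg at hle
  have h1 : (1:ℝ) < 2 * (⌊y/2⌋:ℤ) + 1 := by
    have := hle; unfold ocfA at this; push_cast at this; linarith
  have h2 : (0:ℝ) < ((⌊y/2⌋:ℤ):ℝ) := by push_cast at h1 ⊢; linarith
  have h3 : 0 < ⌊y/2⌋ := by exact_mod_cast h2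
  unfold ocfA; omega

lemma To_gt_one {y : ℝ} (hy : 1 < y) (hyi : Irrational y) : 1 < To y := by
  have ha1 := ocfA_le y
  have ha2 := lt_ocfA y
  have hne : y ≠ (ocfA y : ℝ) := hyi.ne_int _
  have hne' : y ≠ (ocfA y : ℝ) - 1 := by
    have h := hyi.ne_int (ocfA y - 1)
    push_cast at h; exact h
  unfold To ocfE
  split_ifs with hle
  · have h1 : (ocfA y:ℝ) < y := lt_of_le_of_ne hle (Ne.symm hne)
    have h01 : 0 < y - (ocfA y:ℝ) := by linarith
    rw [show ((1:ℤ):ℝ) = 1 by norm_num, lt_div_iff₀ h01]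
    linarith
  · push_neg at hle
    have h1 : (ocfA y:ℝ) - 1 < y := lt_of_le_of_ne ha1 (Ne.symm hne')
    have h01 : y - (ocfA y:ℝ) < 0 := by linarith
    rw [show ((-1:ℤ):ℝ) = -1 by norm_num, lt_div_iff_of_neg h01]
    linarith

lemma To_irr {y : ℝ} (hyi : Irrational y) : Irrational (To y) :=
  (hyi.sub_intCast _).intCast_div (by rcases ocfE_eq y with h | h <;> rw [h] <;> norm_num)

lemma iter_ok (x : ℝ) (hx : 1 < x) (hxi : Irrational x) :
    ∀ n, 1 < To^[n] x ∧ Irrational (To^[n] x) := by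
  intro n; induction n with
  | zero => simpa using ⟨hx, hxi⟩
  | succ n ih =>
    rw [Function.iterate_succ_apply']
    exact ⟨To_gt_one ih.1 ih.2, To_irr ih.2⟩

lemma ocfP_inv (x : ℝ) (hx : 1 < x) (hxi : Irrational x) :
    ∀ n, 0 < ocfP x n ∧ gphi * (ocfP x n : ℝ) < (ocfP x (n+1) : ℝ) ∧
      (ocfE (To^[n] x) = -1 → (2 + gphi) * (ocfP x n : ℝ) < (ocfP x (n+1) : ℝ)) := by
  have hg0 := gphi_pos
  have hg1 := gphi_lt_one
  have hgs := gphi_sq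
  intro n; induction n with
  | zero =>
    have h1 : 1 ≤ ocfA x := ocfA_one_le hx
    have h1r : (1:ℝ) ≤ (ocfA x : ℝ) := by exact_mod_cast h1
    refine ⟨by norm_num [ocfP], ?_, ?_⟩
    · show gphi * ((ocfP x 0 : ℤ) : ℝ) < ((ocfP x 1 : ℤ) : ℝ)
      simp only [ocfP]
      push_cast
      linarith
    · intro h
      simp only [Function.iterate_zero, id_eq] at h
      have h3 : 3 ≤ ocfA x := ocfE_neg_a hx h
      have h3r : (3:ℝ) ≤ (ocfA x : ℝ) := by exact_mod_cast h3
      simp only [ocfP]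
      push_cast
      linarith
  | succ n ih =>
    obtain ⟨hP0, hgr, hEr⟩ := ih
    have hy1 : 1 < To^[n+1] x := (iter_ok x hx hxi (n+1)).1
    have hA1 : 1 ≤ ocfA (To^[n+1] x) := ocfA_one_le hy1
    have hA1r : (1:ℝ) ≤ (ocfA (To^[n+1] x) : ℝ) := by exact_mod_cast hA1
    have hP0r : (0:ℝ) < (ocfP x n : ℝ) := by exact_mod_cast hP0
    have hP1r : (0:ℝ) < (ocfP x (n+1) : ℝ) := by nlinarith
    have hP1 : 0 < ocfP x (n+1) := by exact_mod_cast hP1r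
    have hrec : (ocfP x (n+2) : ℝ) =
        (ocfA (To^[n+1] x) : ℝ) * (ocfP x (n+1) : ℝ) + (ocfE (To^[n] x) : ℝ) * (ocfP x n : ℝ) := by
      have : ocfP x (n+2) = ocfA (To^[n+1] x) * ocfP x (n+1) + ocfE (To^[n] x) * ocfP x n := rfl
      rw [this]; push_cast; ring
    refine ⟨hP1, ?_, ?_⟩
    · rcases ocfE_eq (To^[n] x) with hE | hE <;> rw [hE] at hrec
      · push_cast at hrec
        nlinarith
      · push_cast at hrec
        have hEneg := hEr hE
        nlinarith
    · intro h
      have h3 : 3 ≤ ocfA (To^[n+1] x) := ocfE_neg_a hy1 h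
      have h3r : (3:ℝ) ≤ (ocfA (To^[n+1] x) : ℝ) := by exact_mod_cast h3
      rcases ocfE_eq (To^[n] x) with hE | hE <;> rw [hE] at hrec
      · push_cast at hrec
        nlinarith
      · push_cast at hrec
        have hEneg := hEr hE
        nlinarith

theorem digit_and_sign_from_convergents (x : ℝ) (hx : 1 < x) (hxi : Irrational x)
    (n : ℕ) (hn : 1 ≤ n) (r : ℝ) (hr : r = (ocfP x n : ℝ) / (ocfP x (n - 1) : ℝ))
    (eprev : ℤ) (he : eprev = if n = 1 then 1 else ocfE (To^[n - 2] x)) :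
    ((∃ k : ℕ, 2 * (k : ℝ) + gphi < r ∧ r < 2 * (k : ℝ) + 1) →
      ocfA (To^[n - 1] x) = ⌊r⌋ + 1 ∧ eprev = -1) ∧
    ((∃ k : ℕ, 1 ≤ k ∧ 2 * (k : ℝ) - 1 ≤ r ∧ r < 2 * (k : ℝ)) →
      ocfA (To^[n - 1] x) = ⌊r⌋ ∧ eprev = 1) ∧
    ((∃ k : ℕ, 1 ≤ k ∧ 2 * (k : ℝ) ≤ r ∧ r < 2 * (k : ℝ) + gphi) →
      ocfA (To^[n - 1] x) = ⌊r⌋ - 1 ∧ eprev = 1) := by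
  have hg0 := gphi_pos
  have hg1 := gphi_lt_one
  have hgs := gphi_sq
  obtain ⟨m, rfl⟩ : ∃ m, n = m + 1 := ⟨n - 1, by omega⟩
  cases m with
  | zero =>
    simp only [Nat.add_sub_cancel, Function.iterate_zero, id_eq] at hr ⊢
    have heprev : eprev = 1 := by simpa using he
    have hr' : r = (ocfA x : ℝ) := by
      rw [hr]; simp [ocfP]
    obtain ⟨j, hj⟩ : ∃ j, ocfA x = 2 * j + 1 := ⟨_, rfl⟩
    refine ⟨?_, ?_, ?_⟩
    · rintro ⟨k, h1, h2⟩
      exfalso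
      rw [hr'] at h1 h2
      have hi1 : 2 * (k:ℤ) < ocfA x := by exact_mod_cast show (2*(k:ℤ):ℝ) < (ocfA x:ℝ) by push_cast; linarith
      have hi2 : ocfA x < 2 * (k:ℤ) + 1 := by exact_mod_cast show ((ocfA x:ℤ):ℝ) < 2*(k:ℤ) + 1 by push_cast; linarith
      omega
    · rintro ⟨k, hk, h1, h2⟩
      rw [hr', Int.floor_intCast]
      exact ⟨rfl, heprev⟩
    · rintro ⟨k, hk, h1, h2⟩
      exfalso
      rw [hr'] at h1 h2
      have hi1 : 2 * (k:ℤ) ≤ ocfA x := by exact_mod_cast show (2*(k:ℤ):ℝ) ≤ (ocfA x:ℝ) by push_cast; linarith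
      have hi2 : ocfA x < 2 * (k:ℤ) + 1 := by exact_mod_cast show ((ocfA x:ℤ):ℝ) < 2*(k:ℤ) + 1 by push_cast; linarith
      omega
  | succ m =>
    obtain ⟨hP0, hgr, hEr⟩ := ocfP_inv x hx hxi m
    have hP1 : 0 < ocfP x (m+1) := (ocfP_inv x hx hxi (m+1)).1
    have hy1 : 1 < To^[m+1] x := (iter_ok x hx hxi (m+1)).1
    have hA1 : 1 ≤ ocfA (To^[m+1] x) := ocfA_one_le hy1
    have hA1r : (1:ℝ) ≤ (ocfA (To^[m+1] x) : ℝ) := by exact_mod_cast hA1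
    obtain ⟨j, hj⟩ : ∃ j, ocfA (To^[m+1] x) = 2 * j + 1 := ⟨_, rfl⟩
    have hP0r : (0:ℝ) < (ocfP x m : ℝ) := by exact_mod_cast hP0
    have hP1r : (0:ℝ) < (ocfP x (m+1) : ℝ) := by exact_mod_cast hP1
    have heprev : eprev = ocfE (To^[m] x) := by
      simpa using he
    have hidx : m + 1 + 1 - 1 = m + 1 := rfl
    rw [hidx] at hr ⊢
    have hrec : (ocfP x (m+2) : ℝ) =
        (ocfA (To^[m+1] x) : ℝ) * (ocfP x (m+1) : ℝ) + (ocfE (To^[m] x) : ℝ) * (ocfP x m : ℝ) := by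
      have : ocfP x (m+2) = ocfA (To^[m+1] x) * ocfP x (m+1) + ocfE (To^[m] x) * ocfP x m := rfl
      rw [this]; push_cast; ring
    set A : ℤ := ocfA (To^[m+1] x) with hAdef
    set P0 : ℝ := (ocfP x m : ℝ) with hP0def
    set P1 : ℝ := (ocfP x (m+1) : ℝ) with hP1def
    rcases ocfE_eq (To^[m] x) with hE | hE <;> rw [hE] at hrec heprev <;> push_cast at hrec
    · -- eprev = 1 : A < r < A + 1 + gphi
      have hlow : (A:ℝ) < r := by
        rw [hr, lt_div_iff₀ hP1r, hrec]; nlinarith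
      have hhigh : r < (A:ℝ) + 1 + gphi := by
        rw [hr, div_lt_iff₀ hP1r, hrec]; nlinarith
      refine ⟨?_, ?_, ?_⟩
      · rintro ⟨k, h1, h2⟩
        exfalso
        have hi1 : A < 2 * (k:ℤ) + 1 := by exact_mod_cast show ((A:ℤ):ℝ) < 2*(k:ℤ)+1 by push_cast; linarith
        have hi2 : 2 * (k:ℤ) < A + 1 := by exact_mod_cast show (2*(k:ℤ):ℝ) < (A:ℝ) + 1 by push_cast; linarith
        omega
      · rintro ⟨k, hk, h1, h2⟩
        have hi1 : A < 2 * (k:ℤ) := by exact_mod_cast show ((A:ℤ):ℝ) < 2*(k:ℤ) by push_cast; linarith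
        have hi2 : 2 * (k:ℤ) - 1 < A + 2 := by exact_mod_cast show (2*(k:ℤ):ℝ) - 1 < (A:ℝ) + 2 by push_cast; linarith
        have hA : A = 2 * (k:ℤ) - 1 := by omega
        have hfl : ⌊r⌋ = 2 * (k:ℤ) - 1 := by
          rw [Int.floor_eq_iff]
          constructor <;> push_cast <;> linarith
        rw [hfl, hA]
        exact ⟨rfl, heprev⟩
      · rintro ⟨k, hk, h1, h2⟩
        have hi1 : A < 2 * (k:ℤ) + 1 := by exact_mod_cast show ((A:ℤ):ℝ) < 2*(k:ℤ)+1 by push_cast; linarith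
        have hi2 : 2 * (k:ℤ) < A + 2 := by exact_mod_cast show (2*(k:ℤ):ℝ) < (A:ℝ) + 2 by push_cast; linarith
        have hA : A = 2 * (k:ℤ) - 1 := by omega
        have hfl : ⌊r⌋ = 2 * (k:ℤ) := by
          rw [Int.floor_eq_iff]
          constructor <;> push_cast <;> linarith
        rw [hfl, hA]
        exact ⟨by ring, heprev⟩
    · -- eprev = -1 : A - 1 + gphi < r < A
      have hEneg : (2 + gphi) * P0 < P1 := hEr hE
      have hhigh : r < (A:ℝ) := by
        rw [hr, div_lt_iff₀ hP1r, hrec]; nlinarith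
      have hlow : (A:ℝ) - 1 + gphi < r := by
        rw [hr, lt_div_iff₀ hP1r, hrec]; nlinarith
      refine ⟨?_, ?_, ?_⟩
      · rintro ⟨k, h1, h2⟩
        have hi1 : 2 * (k:ℤ) < A := by exact_mod_cast show (2*(k:ℤ):ℝ) < (A:ℝ) by push_cast; linarith
        have hi2 : A - 1 < 2 * (k:ℤ) + 1 := by exact_mod_cast show ((A:ℤ):ℝ) - 1 < 2*(k:ℤ)+1 by push_cast; linarith
        have hA : A = 2 * (k:ℤ) + 1 := by omega
        have hfl : ⌊r⌋ = 2 * (k:ℤ) := by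
          rw [Int.floor_eq_iff]
          constructor <;> push_cast <;> linarith
        rw [hfl, hA]
        exact ⟨rfl, heprev⟩
      · rintro ⟨k, hk, h1, h2⟩
        exfalso
        have hi1 : 2 * (k:ℤ) - 1 < A := by exact_mod_cast show (2*(k:ℤ):ℝ) - 1 < (A:ℝ) by push_cast; linarith
        have hi2 : A - 1 < 2 * (k:ℤ) := by exact_mod_cast show ((A:ℤ):ℝ) - 1 < 2*(k:ℤ) by push_cast; linarith
        omega
      · rintro ⟨k, hk, h1, h2⟩
        exfalso
        have hi1 : 2 * (k:ℤ) < A := by exact_mod_cast show (2*(k:ℤ):ℝ) < (A:ℝ) by push_cast; linarith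
        have hi2 : A - 1 < 2 * (k:ℤ) := by exact_mod_cast show ((A:ℤ):ℝ) - 1 < 2*(k:ℤ) by push_cast; linarith
        omega
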